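/- Let A, B₁, B₂, C : ℝ → ℝ be differentiable, let W(r,x,y) = A(r)(x²+y²) + B₁(r)x + B₂(r)y + C(r), and suppose W(r,x,y) > 0. Define ν = −log W and the polynomials Q₁ = (AB₁′ − A′B₁)(x² − y²) + 2(AB₂′ − A′B₂)xy + 2(AC′ − A′C)x + (B₁B₂′ − B₁′B₂)y + (B₁C′ − B₁′C) and Q₂ = (AB₂′ − A′B₂)(y² − x²) + 2(AB₁′ − A′B₁)xy + 2(AC′ − A′C)y + (B₂B₁′ − B₂′B₁)x + (B₂C′ − B₂′C), with all functions evaluated at r and primes denoting d/dr. Then at every point where W > 0, ∂²ν/∂r∂x = Q₁/W² and ∂²ν/∂r∂y = Q₂/W². In particular, both mixed partials ∂²ν/∂r∂x and ∂²ν/∂r∂y vanish at (r,x,y) if and only if Q₁ = 0 and Q₂ = 0 there. -/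

import Mathlib

/-- The key computation in Proposition 1: with `ν = -log W` where
`W = A(x²+y²) + B₁x + B₂y + C > 0`, the mixed partials satisfy
`∂²ν/∂r∂x = Q₁/W²` and `∂²ν/∂r∂y = Q₂/W²`, so both vanish iff
`Q₁ = Q₂ = 0`. -/
theorem mixed_partials_eq_Q_over_W_sq (A B₁ B₂ C : ℝ → ℝ)
    (hA : Differentiable ℝ A) (hB₁ : Differentiable ℝ B₁)
    (hB₂ : Differentiable ℝ B₂) (hC : Differentiable ℝ C)
    (W : ℝ → ℝ → ℝ → ℝ)
    (hW : ∀ r x y, W r x y = A r * (x ^ 2 + y ^ 2) + B₁ r * x + B₂ r * y + C r)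
    (hWpos : ∀ r x y, 0 < W r x y)
    (ν : ℝ → ℝ → ℝ → ℝ)
    (hν : ∀ r x y, ν r x y = -Real.log (W r x y))
    (Q₁ Q₂ : ℝ → ℝ → ℝ → ℝ)
    (hQ₁ : ∀ r x y, Q₁ r x y =
      (A r * deriv B₁ r - deriv A r * B₁ r) * (x ^ 2 - y ^ 2)
      + 2 * (A r * deriv B₂ r - deriv A r * B₂ r) * x * y
      + 2 * (A r * deriv C r - deriv A r * C r) * x
      + (B₁ r * deriv B₂ r - deriv B₁ r * B₂ r) * y
      + (B₁ r * deriv C r - deriv B₁ r * C r))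
    (hQ₂ : ∀ r x y, Q₂ r x y =
      (A r * deriv B₂ r - deriv A r * B₂ r) * (y ^ 2 - x ^ 2)
      + 2 * (A r * deriv B₁ r - deriv A r * B₁ r) * x * y
      + 2 * (A r * deriv C r - deriv A r * C r) * y
      + (B₂ r * deriv B₁ r - deriv B₂ r * B₁ r) * x
      + (B₂ r * deriv C r - deriv B₂ r * C r)) :
    ∀ r x y : ℝ,
      deriv (fun r' => deriv (fun x' => ν r' x' y) x) r = Q₁ r x y / W r x y ^ 2 ∧
      deriv (fun r' => deriv (fun y' => ν r' x y') y) r = Q₂ r x y / W r x y ^ 2 ∧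
      ((deriv (fun r' => deriv (fun x' => ν r' x' y) x) r = 0 ∧
        deriv (fun r' => deriv (fun y' => ν r' x y') y) r = 0) ↔
        (Q₁ r x y = 0 ∧ Q₂ r x y = 0)) := by
  intro r x y
  have hWne : ∀ r' x' y', A r' * (x' ^ 2 + y' ^ 2) + B₁ r' * x' + B₂ r' * y' + C r' ≠ 0 := by
    intro r' x' y'
    rw [← hW]
    exact (hWpos r' x' y').ne'
  -- inner derivative in x
  have hx : ∀ r', deriv (fun x' => ν r' x' y) x
      = -((2 * A r' * x + B₁ r') / (A r' * (x ^ 2 + y ^ 2) + B₁ r' * x + B₂ r' * y + C r')) := by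
    intro r'
    have h1 : (fun x' => ν r' x' y)
        = fun x' => -Real.log (A r' * (x' ^ 2 + y ^ 2) + B₁ r' * x' + B₂ r' * y + C r') := by
      funext x'; rw [hν, hW]
    rw [h1]
    have hx2 : HasDerivAt (fun x' : ℝ => x' ^ 2 + y ^ 2) (2 * x) x := by
      simpa using (hasDerivAt_pow 2 x).add_const (y ^ 2)
    have hu : HasDerivAt
        (fun x' => A r' * (x' ^ 2 + y ^ 2) + B₁ r' * x' + B₂ r' * y + C r')
        (A r' * (2 * x) + B₁ r' * 1) x := by
      exact (((hx2.const_mul (A r')).add ((hasDerivAt_id x).const_mul (B₁ r'))).add_const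
        (B₂ r' * y)).add_const (C r')
    have hlog : HasDerivAt
        (fun x' => -Real.log (A r' * (x' ^ 2 + y ^ 2) + B₁ r' * x' + B₂ r' * y + C r'))
        (-((A r' * (x ^ 2 + y ^ 2) + B₁ r' * x + B₂ r' * y + C r')⁻¹ * (A r' * (2 * x) + B₁ r' * 1)))
        x := by have := ((Real.hasDerivAt_log (hWne r' x y)).comp x hu).fun_neg; exact this
    rw [hlog.deriv, div_eq_mul_inv]
    ring
  -- inner derivative in y
  have hy : ∀ r', deriv (fun y' => ν r' x y') y
      = -((2 * A r' * y + B₂ r') / (A r' * (x ^ 2 + y ^ 2) + B₁ r' * x + B₂ r' * y + C r')) := by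
    intro r'
    have h1 : (fun y' => ν r' x y')
        = fun y' => -Real.log (A r' * (x ^ 2 + y' ^ 2) + B₁ r' * x + B₂ r' * y' + C r') := by
      funext y'; rw [hν, hW]
    rw [h1]
    have hy2 : HasDerivAt (fun y' : ℝ => x ^ 2 + y' ^ 2) (2 * y) y := by
      simpa using (hasDerivAt_pow 2 y).const_add (x ^ 2)
    have hu : HasDerivAt
        (fun y' => A r' * (x ^ 2 + y' ^ 2) + B₁ r' * x + B₂ r' * y' + C r')
        (A r' * (2 * y) + B₂ r' * 1) y := by
      exact ((((hy2.const_mul (A r')).add_const (B₁ r' * x)).add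
        ((hasDerivAt_id y).const_mul (B₂ r'))).add_const (C r'))
    have hlog : HasDerivAt
        (fun y' => -Real.log (A r' * (x ^ 2 + y' ^ 2) + B₁ r' * x + B₂ r' * y' + C r'))
        (-((A r' * (x ^ 2 + y ^ 2) + B₁ r' * x + B₂ r' * y + C r')⁻¹ * (A r' * (2 * y) + B₂ r' * 1)))
        y := by have := ((Real.hasDerivAt_log (hWne r' x y)).comp y hu).fun_neg; exact this
    rw [hlog.deriv, div_eq_mul_inv]
    ring
  -- outer derivative pieces
  have hd : HasDerivAt
      (fun r' => A r' * (x ^ 2 + y ^ 2) + B₁ r' * x + B₂ r' * y + C r')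
      (deriv A r * (x ^ 2 + y ^ 2) + deriv B₁ r * x + deriv B₂ r * y + deriv C r) r := by
    exact ((((hA r).hasDerivAt.mul_const (x ^ 2 + y ^ 2)).add
      ((hB₁ r).hasDerivAt.mul_const x)).add ((hB₂ r).hasDerivAt.mul_const y)).add
      (hC r).hasDerivAt
  have e1 : deriv (fun r' => deriv (fun x' => ν r' x' y) x) r = Q₁ r x y / W r x y ^ 2 := by
    have h2 : (fun r' => deriv (fun x' => ν r' x' y) x)
        = fun r' => -((2 * A r' * x + B₁ r')
            / (A r' * (x ^ 2 + y ^ 2) + B₁ r' * x + B₂ r' * y + C r')) := funext hx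
    rw [h2]
    have hn : HasDerivAt (fun r' => 2 * A r' * x + B₁ r')
        (2 * deriv A r * x + deriv B₁ r) r :=
      (((hA r).hasDerivAt.const_mul 2).mul_const x).add (hB₁ r).hasDerivAt
    rw [((hn.fun_div hd (hWne r x y)).fun_neg).deriv, hQ₁, hW]
    have h0 := hWne r x y
    field_simp
    ring
  have e2 : deriv (fun r' => deriv (fun y' => ν r' x y') y) r = Q₂ r x y / W r x y ^ 2 := by
    have h2 : (fun r' => deriv (fun y' => ν r' x y') y)
        = fun r' => -((2 * A r' * y + B₂ r')
            / (A r' * (x ^ 2 + y ^ 2) + B₁ r' * x + B₂ r' * y + C r')) := funext hy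
    rw [h2]
    have hn : HasDerivAt (fun r' => 2 * A r' * y + B₂ r')
        (2 * deriv A r * y + deriv B₂ r) r :=
      (((hA r).hasDerivAt.const_mul 2).mul_const y).add (hB₂ r).hasDerivAt
    rw [((hn.fun_div hd (hWne r x y)).fun_neg).deriv, hQ₂, hW]
    have h0 := hWne r x y
    field_simp
    ring
  refine ⟨e1, e2, ?_⟩
  rw [e1, e2]
  simp [div_eq_zero_iff, pow_eq_zero_iff, (hWpos r x y).ne']
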